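/- Let X = (X₁, …, X_n) be a random variable taking values in the product set S = S₁ × ⋯ × S_n of finite sets, where each coordinate X_j is a random variable taking values in S_j. For every α ≥ 1, the THC entropy is subadditive: H_α(X) ≤ Σ_{j=1}^n H_α(X_j). -/

import Mathlib

open Finset

/-- The α-logarithm: `ln_α(ξ) = (ξ^(1-α) - 1)/(1-α)` for `α ≠ 1`, and `ln ξ` for `α = 1`. -/
noncomputable def alphaLog (α ξ : ℝ) : ℝ :=
  if α = 1 then Real.log ξ else (ξ ^ (1 - α) - 1) / (1 - α)

/-- The Tsallis–Havrda–Charvát entropy of order `α` of a pmf `p` on a finite set. -/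
noncomputable def thc (α : ℝ) {S : Type*} [Fintype S] (p : S → ℝ) : ℝ :=
  if α = 1 then -∑ s, p s * Real.log (p s)
  else ((∑ s, p s ^ α) - 1) / (1 - α)

/-- The binary THC entropy `h_α(q)`. -/
noncomputable def binThc (α q : ℝ) : ℝ :=
  if α = 1 then -(q * Real.log q) - (1 - q) * Real.log (1 - q)
  else (q ^ α + (1 - q) ^ α - 1) / (1 - α)

/-- First conditional THC entropy (Daróczy form): `H_α(X|Y) = Σ_y p(y)^α H_α(X|y)`,
where `p` is the joint pmf of `(X, Y)`.  (Terms with `p(y) = 0` vanish for `α > 0`.) -/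
noncomputable def condThc1 (α : ℝ) {SX SY : Type*} [Fintype SX] [Fintype SY]
    (p : SX × SY → ℝ) : ℝ :=
  ∑ y, (∑ x, p (x, y)) ^ α * thc α (fun x => p (x, y) / ∑ x', p (x', y))

/-- Second conditional THC entropy: `H̃_α(X|Y) = Σ_y p(y) H_α(X|y)`,
where `p` is the joint pmf of `(X, Y)`.  (Terms with `p(y) = 0` vanish.) -/
noncomputable def condThc2 (α : ℝ) {SX SY : Type*} [Fintype SX] [Fintype SY]
    (p : SX × SY → ℝ) : ℝ :=
  ∑ y, (∑ x, p (x, y)) * thc α (fun x => p (x, y) / ∑ x', p (x', y))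

/-- The pmf of a random variable `X` defined on a finite sample space with pmf `μ`. -/
noncomputable def distOf {Ω S : Type*} [Fintype Ω] [DecidableEq S]
    (μ : Ω → ℝ) (X : Ω → S) : S → ℝ :=
  fun s => ∑ ω ∈ Finset.univ.filter (fun ω => X ω = s), μ ω


noncomputable def tf (α : ℝ) : ℝ → ℝ :=
  if α = 1 then Real.negMulLog else fun t => (t ^ α - t) / (1 - α)

lemma tf_zero {α : ℝ} (hα : 1 ≤ α) : tf α 0 = 0 := by
  unfold tf
  by_cases h : α = 1
  · simp [h]
  · simp [h, Real.zero_rpow (by positivity : α ≠ 0)]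

lemma tf_nonneg {α : ℝ} (hα : 1 ≤ α) {t : ℝ} (h0 : 0 ≤ t) (h1 : t ≤ 1) : 0 ≤ tf α t := by
  unfold tf
  by_cases h : α = 1
  · simpa [h] using Real.negMulLog_nonneg h0 h1
  · simp only [if_neg h]
    have hαgt : 1 < α := lt_of_le_of_ne hα (Ne.symm h)
    have hnum : t ^ α - t ≤ 0 := by
      rcases eq_or_lt_of_le h0 with h0' | h0'
      · simp [← h0', Real.zero_rpow (by positivity : α ≠ 0)]
      · have := Real.rpow_le_rpow_of_exponent_ge h0' h1 hα
        simpa [Real.rpow_one] using sub_nonpos.2 this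
    have hden : 1 - α ≤ 0 := by linarith
    exact div_nonneg_of_nonpos hnum hden

lemma tf_mul {α : ℝ} (hα : 1 ≤ α) {c t : ℝ} (hc : 0 ≤ c) (ht : 0 ≤ t) :
    tf α (c * t) = t * tf α c + c ^ α * tf α t := by
  unfold tf
  by_cases h : α = 1
  · simp only [if_pos h, h, Real.rpow_one]
    exact Real.negMulLog_mul c t
  · simp only [if_neg h]
    rw [Real.mul_rpow hc ht]
    have h1 : (1:ℝ) - α ≠ 0 := sub_ne_zero.2 fun hh => h hh.symm
    field_simp
    ring

lemma tf_concave {α : ℝ} (hα : 1 ≤ α) : ConcaveOn ℝ (Set.Ici 0) (tf α) := by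
  unfold tf
  by_cases h : α = 1
  · simpa [h] using Real.concaveOn_negMulLog
  · simp only [if_neg h]
    have hg : ConcaveOn ℝ (Set.Ici (0:ℝ)) fun t : ℝ => (1/(α-1)) • (t - t ^ α) := by
      apply ConcaveOn.smul
      · have : (0:ℝ) ≤ α - 1 := by linarith
        positivity
      · exact (concaveOn_id (convex_Ici 0)).sub (convexOn_rpow hα)
    have he : (fun t : ℝ => (1/(α-1)) • (t - t ^ α)) = fun t : ℝ => (t ^ α - t) / (1 - α) := by
      funext t
      have h1 : (1:ℝ) - α ≠ 0 := sub_ne_zero.2 fun hh => h hh.symm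
      have h2 : α - 1 ≠ 0 := sub_ne_zero.2 h
      rw [smul_eq_mul, one_div_mul_eq_div, show (1:ℝ) - α = -(α - 1) by ring, div_neg, ← neg_div, neg_sub]
    rwa [he] at hg

lemma thc_eq_sum_tf {S : Type*} [Fintype S] (α : ℝ) (p : S → ℝ) (hp1 : ∑ s, p s = 1) :
    thc α p = ∑ s, tf α (p s) := by
  unfold thc tf
  by_cases h : α = 1
  · simp [h, Real.negMulLog]
  · simp only [if_neg h]
    rw [← Finset.sum_div, Finset.sum_sub_distrib, hp1]

lemma sum_tf_pair_le {SX SY : Type*} [Fintype SX] [Fintype SY] (α : ℝ) (hα : 1 ≤ α)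
    (p : SX × SY → ℝ) (hp : ∀ z, 0 ≤ p z) (hp1 : ∑ z, p z = 1) :
    ∑ z, tf α (p z) ≤
      (∑ x, tf α (∑ y, p (x, y))) + ∑ y, tf α (∑ x, p (x, y)) := by
  classical
  set c : SY → ℝ := fun y => ∑ x, p (x, y) with hc
  set q : SX → SY → ℝ := fun x y => p (x, y) / c y with hq
  have hc0 : ∀ y, 0 ≤ c y := fun y => Finset.sum_nonneg fun x _ => hp _
  have hcsum : ∑ y, c y = 1 := by
    rw [hc]; rw [← hp1, Fintype.sum_prod_type_right]
  have hc1 : ∀ y, c y ≤ 1 := by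
    intro y
    rw [← hcsum]
    exact Finset.single_le_sum (fun y _ => hc0 y) (Finset.mem_univ y)
  have hple : ∀ x y, p (x, y) ≤ c y := fun x y =>
    Finset.single_le_sum (fun x _ => hp (x, y)) (Finset.mem_univ x)
  have hq0 : ∀ x y, 0 ≤ q x y := fun x y => div_nonneg (hp _) (hc0 y)
  have hq1 : ∀ x y, q x y ≤ 1 := by
    intro x y
    rcases eq_or_lt_of_le (hc0 y) with h | h
    · simp [hq, ← h]
    · exact (div_le_one h).2 (hple x y)
  have hcq : ∀ x y, c y * q x y = p (x, y) := by
    intro x y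
    rcases eq_or_lt_of_le (hc0 y) with h | h
    · have : p (x, y) = 0 := le_antisymm (by rw [h]; exact hple x y) (hp _)
      simp [hq, this]
    · show c y * (p (x, y) / c y) = p (x, y); field_simp [h.ne']
  -- Step 1 : per-y bound
  have step1 : ∀ y, ∑ x, tf α (p (x, y)) ≤ tf α (c y) + ∑ x, c y * tf α (q x y) := by
    intro y
    rcases eq_or_lt_of_le (hc0 y) with h | h
    · have hz : ∀ x, p (x, y) = 0 := fun x =>
        le_antisymm (by rw [h]; exact hple x y) (hp _)
      simp [hz, ← h, tf_zero hα]
    · have hqsum : ∑ x, q x y = 1 := by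
        rw [hq]
        rw [← Finset.sum_div]
        rw [div_eq_one_iff_eq (ne_of_gt h)]
      have hrw : ∀ x, tf α (p (x, y)) = q x y * tf α (c y) + (c y) ^ α * tf α (q x y) := by
        intro x
        rw [← hcq x y, tf_mul hα (hc0 y) (hq0 x y)]
      calc ∑ x, tf α (p (x, y))
          = (∑ x, q x y) * tf α (c y) + (c y) ^ α * ∑ x, tf α (q x y) := by
            rw [Finset.sum_congr rfl fun x _ => hrw x, Finset.sum_add_distrib,
              ← Finset.sum_mul, ← Finset.mul_sum]
        _ = tf α (c y) + (c y) ^ α * ∑ x, tf α (q x y) := by rw [hqsum, one_mul]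
        _ ≤ tf α (c y) + c y * ∑ x, tf α (q x y) := by
            have h1 : (c y) ^ α ≤ c y := by
              have := Real.rpow_le_rpow_of_exponent_ge h (hc1 y) hα
              simpa [Real.rpow_one] using this
            have h2 : 0 ≤ ∑ x, tf α (q x y) :=
              Finset.sum_nonneg fun x _ => tf_nonneg hα (hq0 x y) (hq1 x y)
            nlinarith
        _ = tf α (c y) + ∑ x, c y * tf α (q x y) := by rw [Finset.mul_sum]
  -- Step 3 : Jensen per x
  have step3 : ∀ x, ∑ y, c y * tf α (q x y) ≤ tf α (∑ y, p (x, y)) := by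
    intro x
    have := (tf_concave (α := α) hα).le_map_sum (t := Finset.univ) (w := c) (p := fun y => q x y)
      (fun y _ => hc0 y) hcsum (fun y _ => hq0 x y)
    simp only [smul_eq_mul] at this
    calc ∑ y, c y * tf α (q x y) ≤ tf α (∑ y, c y * q x y) := this
      _ = tf α (∑ y, p (x, y)) := by rw [Finset.sum_congr rfl fun y _ => hcq x y]
  calc ∑ z, tf α (p z) = ∑ y, ∑ x, tf α (p (x, y)) := by rw [Fintype.sum_prod_type_right]
    _ ≤ ∑ y, (tf α (c y) + ∑ x, c y * tf α (q x y)) :=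
        Finset.sum_le_sum fun y _ => step1 y
    _ = (∑ x, ∑ y, c y * tf α (q x y)) + ∑ y, tf α (c y) := by
        rw [Finset.sum_add_distrib, Finset.sum_comm]; ring
    _ ≤ (∑ x, tf α (∑ y, p (x, y))) + ∑ y, tf α (c y) := by
        gcongr with x _; exact step3 x

lemma distOf_nonneg {Ω S : Type*} [Fintype Ω] [Fintype S] [DecidableEq S]
    (μ : Ω → ℝ) (hμ : ∀ ω, 0 ≤ μ ω) (X : Ω → S) (s : S) : 0 ≤ distOf μ X s :=
  Finset.sum_nonneg fun ω _ => hμ ω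

lemma distOf_sum_one {Ω S : Type*} [Fintype Ω] [Fintype S] [DecidableEq S]
    (μ : Ω → ℝ) (hμ1 : ∑ ω, μ ω = 1) (X : Ω → S) : ∑ s, distOf μ X s = 1 := by
  unfold distOf
  rw [Finset.sum_fiberwise Finset.univ X μ, hμ1]

lemma distOf_pair_fst {Ω SY SZ : Type*} [Fintype Ω] [Fintype SZ] [DecidableEq SY]
    [DecidableEq SZ] (μ : Ω → ℝ) (Y : Ω → SY) (Z : Ω → SZ) (y : SY) :
    ∑ z, distOf μ (fun ω => (Y ω, Z ω)) (y, z) = distOf μ Y y := by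
  unfold distOf
  rw [← Finset.sum_fiberwise (Finset.univ.filter fun ω => Y ω = y) Z μ]
  apply Finset.sum_congr rfl
  intro z _
  congr 1
  ext ω
  simp only [Finset.mem_filter, Finset.mem_univ, true_and, Prod.mk.injEq]

lemma distOf_pair_snd {Ω SY SZ : Type*} [Fintype Ω] [Fintype SY] [DecidableEq SY]
    [DecidableEq SZ] (μ : Ω → ℝ) (Y : Ω → SY) (Z : Ω → SZ) (z : SZ) :
    ∑ y, distOf μ (fun ω => (Y ω, Z ω)) (y, z) = distOf μ Z z := by
  unfold distOf
  rw [← Finset.sum_fiberwise (Finset.univ.filter fun ω => Z ω = z) Y μ]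
  apply Finset.sum_congr rfl
  intro y _
  congr 1
  ext ω
  simp only [Finset.mem_filter, Finset.mem_univ, true_and, Prod.mk.injEq]
  tauto

lemma thc_pair_distOf {Ω SY SZ : Type*} [Fintype Ω] [Fintype SY] [Fintype SZ]
    [DecidableEq SY] [DecidableEq SZ] (α : ℝ) (hα : 1 ≤ α)
    (μ : Ω → ℝ) (hμ : ∀ ω, 0 ≤ μ ω) (hμ1 : ∑ ω, μ ω = 1) (Y : Ω → SY) (Z : Ω → SZ) :
    thc α (distOf μ (fun ω => (Y ω, Z ω))) ≤ thc α (distOf μ Y) + thc α (distOf μ Z) := by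
  set p := distOf μ (fun ω => (Y ω, Z ω)) with hp
  have hp0 : ∀ w, 0 ≤ p w := distOf_nonneg μ hμ _
  have hp1 : ∑ w, p w = 1 := distOf_sum_one μ hμ1 _
  have key := sum_tf_pair_le α hα p hp0 hp1
  rw [thc_eq_sum_tf α p hp1]
  have hY1 : ∑ y, distOf μ Y y = 1 := distOf_sum_one μ hμ1 Y
  have hZ1 : ∑ z, distOf μ Z z = 1 := distOf_sum_one μ hμ1 Z
  rw [thc_eq_sum_tf α _ hY1, thc_eq_sum_tf α _ hZ1]
  calc ∑ w, tf α (p w)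
      ≤ (∑ y, tf α (∑ z, p (y, z))) + ∑ z, tf α (∑ y, p (y, z)) := key
    _ = (∑ y, tf α (distOf μ Y y)) + ∑ z, tf α (distOf μ Z z) := by
        congr 1
        · exact Finset.sum_congr rfl fun y _ => by rw [distOf_pair_fst]
        · exact Finset.sum_congr rfl fun z _ => by rw [distOf_pair_snd]

lemma thc_distOf_equiv {Ω S T : Type*} [Fintype Ω] [Fintype S] [Fintype T]
    [DecidableEq S] [DecidableEq T] (α : ℝ) (μ : Ω → ℝ) (X : Ω → S) (e : S ≃ T) :
    thc α (distOf μ (fun ω => e (X ω))) = thc α (distOf μ X) := by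
  have h : ∀ t, distOf μ (fun ω => e (X ω)) t = distOf μ X (e.symm t) := by
    intro t
    unfold distOf
    congr 1
    ext ω
    simp [Equiv.eq_symm_apply]
  have hs1 : ∑ t, distOf μ (fun ω => e (X ω)) t * Real.log (distOf μ (fun ω => e (X ω)) t)
      = ∑ s, distOf μ X s * Real.log (distOf μ X s) := by
    apply Fintype.sum_equiv e.symm
    intro t
    rw [h t]
  have hs2 : ∑ t, distOf μ (fun ω => e (X ω)) t ^ α = ∑ s, distOf μ X s ^ α := by
    apply Fintype.sum_equiv e.symm
    intro t
    rw [h t]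
  unfold thc
  rw [hs1, hs2]

theorem thc_subadd_aux {Ω : Type v} [Fintype Ω] (μ : Ω → ℝ) (hμ : ∀ ω, 0 ≤ μ ω)
    (hμ1 : ∑ ω, μ ω = 1) (α : ℝ) (hα : 1 ≤ α) :
    ∀ (n : ℕ) (S : Fin n → Type u) (i1 : ∀ i, Fintype (S i)) (i2 : ∀ i, DecidableEq (S i))
      (X : ∀ i, Ω → S i),
      thc α (distOf μ (fun ω => fun i => X i ω)) ≤ ∑ j, thc α (distOf μ (X j))
  | 0, S, i1, i2, X => by
    have hp : ∀ s, distOf μ (fun ω (i : Fin 0) => X i ω) s = 1 := by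
      intro s
      unfold distOf
      rw [Finset.filter_true_of_mem, hμ1]
      intro ω _
      funext i
      exact i.elim0
    rw [show (∑ j : Fin 0, thc α (distOf μ (X j))) = 0 by simp]
    unfold thc
    split
    · simp [hp]
    · simp [hp, Real.one_rpow, Fintype.card_pi]
  | (n+1), S, i1, i2, X => by
    have ih := thc_subadd_aux μ hμ hμ1 α hα n (fun i => S i.succ) (fun i => i1 i.succ)
      (fun i => i2 i.succ) (fun i ω => X i.succ ω)
    set Z : Ω → ∀ i : Fin n, S i.succ := fun ω i => X i.succ ω with hZ
    have hmap : (fun ω => fun i => X i ω) = fun ω => (Fin.consEquiv S) (X 0 ω, Z ω) := by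
      funext ω
      exact (Fin.cons_self_tail fun i => X i ω).symm
    rw [hmap, thc_distOf_equiv α μ (fun ω => (X 0 ω, Z ω)) (Fin.consEquiv S)]
    calc thc α (distOf μ fun ω => (X 0 ω, Z ω))
        ≤ thc α (distOf μ (X 0)) + thc α (distOf μ Z) :=
          thc_pair_distOf α hα μ hμ hμ1 (X 0) Z
      _ ≤ thc α (distOf μ (X 0)) + ∑ j : Fin n, thc α (distOf μ (fun ω => X j.succ ω)) := by
          exact add_le_add_right ih _
      _ = ∑ j : Fin (n+1), thc α (distOf μ (X j)) := (Fin.sum_univ_succ fun j => thc α (distOf μ (X j))).symm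

/-- Let `X = (X₁, …, Xₙ)` be a random variable with values in a finite
product set. For every `α ≥ 1`, the THC entropy is subadditive:
`H_α(X) ≤ Σ_j H_α(X_j)`. -/
theorem thc_subadditive {Ω : Type*} [Fintype Ω] (n : ℕ) (S : Fin n → Type*)
    [∀ i, Fintype (S i)] [∀ i, DecidableEq (S i)]
    (μ : Ω → ℝ) (hμ : ∀ ω, 0 ≤ μ ω) (hμ1 : ∑ ω, μ ω = 1)
    (X : ∀ i : Fin n, Ω → S i)
    (α : ℝ) (hα : 1 ≤ α) :
    thc α (distOf μ (fun ω => fun i : Fin n => X i ω)) ≤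
      ∑ j, thc α (distOf μ (X j)) := by
  exact thc_subadd_aux μ hμ hμ1 α hα n S _ _ X
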